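/- Let A and B be unital complex *-algebras equipped with linear functionals τ : A → ℂ and σ : B → ℂ satisfying τ(xy) = τ(yx), σ(xy) = σ(yx) and τ(1) = σ(1) = 1. Let x_1,…,x_n ∈ A and y_1,…,y_n ∈ B be self-adjoint elements. Assume that for every integer m ≥ 1, every n-tuple of Hermitian matrices a_1,…,a_n ∈ M_m(ℂ) and every integer j ≥ 1, one has (tr_m ⊗ τ)((a_1 ⊗ x_1 + ⋯ + a_n ⊗ x_n)^j) = (tr_m ⊗ σ)((a_1 ⊗ y_1 + ⋯ + a_n ⊗ y_n)^j). Then (x_1,…,x_n) and (y_1,…,y_n) have the same distribution: for every integer k ≥ 1 and all indices i_1,…,i_k ∈ {1,…,n}, τ(x_{i_1} x_{i_2} ⋯ x_{i_k}) = σ(y_{i_1} y_{i_2} ⋯ y_{i_k}). -/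

import Mathlib

open scoped Matrix

/-- `a ⊗ x`: the matrix with entries `a i j • x`, an element of `M_m(A)`. -/
noncomputable def matTensor {m : ℕ} {A : Type*} [Ring A] [Module ℂ A]
    (a : Matrix (Fin m) (Fin m) ℂ) (x : A) : Matrix (Fin m) (Fin m) A :=
  Matrix.of fun i j => a i j • x

section Aux

variable {A : Type*} [Ring A] [Algebra ℂ A]

lemma matTensor_sum {m : ℕ} {ι : Type*} (s : Finset ι) (a : ι → Matrix (Fin m) (Fin m) ℂ)
    (x : A) : matTensor (∑ p ∈ s, a p) x = ∑ p ∈ s, matTensor (a p) x := by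
  ext i j
  simp [matTensor, Matrix.sum_apply, Finset.sum_smul]

lemma matTensor_mul {m : ℕ} (a b : Matrix (Fin m) (Fin m) ℂ) (x y : A) :
    matTensor a x * matTensor b y = matTensor (a * b) (x * y) := by
  ext i j
  simp only [matTensor, Matrix.mul_apply, Matrix.of_apply, Finset.sum_smul]
  refine Finset.sum_congr rfl fun l _ => ?_
  rw [smul_mul_smul_comm]

lemma matTensor_one {m : ℕ} : matTensor (1 : Matrix (Fin m) (Fin m) ℂ) (1 : A) = 1 := by
  ext i j
  simp only [matTensor, Matrix.of_apply, Matrix.one_apply]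
  split <;> simp

lemma matTensor_prod {m k : ℕ} (a : Fin k → Matrix (Fin m) (Fin m) ℂ) (x : Fin k → A) :
    (List.ofFn fun q => matTensor (a q) (x q)).prod =
      matTensor (List.ofFn a).prod (List.ofFn x).prod := by
  induction k with
  | zero => simpa using (matTensor_one (m := m) (A := A)).symm
  | succ k ih =>
    rw [List.ofFn_succ, List.ofFn_succ (f := a), List.ofFn_succ (f := x)]
    simp only [List.prod_cons]
    rw [ih, matTensor_mul]

lemma sum_pow_expand {R : Type*} [Semiring R] {ι : Type*} [Fintype ι] [DecidableEq ι]
    (f : ι → R) (k : ℕ) :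
    (∑ i, f i) ^ k = ∑ g : Fin k → ι, (List.ofFn fun q => f (g q)).prod := by
  induction k with
  | zero => simp
  | succ k ih =>
    have hcons : ∀ (p : ι × (Fin k → ι)),
        (List.ofFn fun q => f ((Fin.consEquiv fun _ => ι) p q)).prod
          = f p.1 * (List.ofFn fun q => f (p.2 q)).prod := by
      intro p
      rw [List.ofFn_succ]
      simp [Fin.consEquiv]
    rw [pow_succ', ih, Finset.mul_sum,
      ← Equiv.sum_comp (Fin.consEquiv fun _ => ι) (fun g => (List.ofFn fun q => f (g q)).prod)]
    rw [Fintype.sum_prod_type]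
    rw [Finset.sum_comm]
    refine Finset.sum_congr rfl fun g _ => ?_
    simp only [hcons]
    rw [← Finset.sum_mul]

lemma F_expand (τ : A →ₗ[ℂ] ℂ) {k : ℕ}
    (h : Fin k → Matrix (Fin k) (Fin k) ℂ) (z : Fin k → A) :
    (k : ℂ)⁻¹ * ∑ i, τ (((∑ p, matTensor (h p) (z p)) ^ k) i i) =
    ∑ g : Fin k → Fin k, ((k : ℂ)⁻¹ * ((List.ofFn fun q => h (g q)).prod).trace) *
      τ (List.ofFn fun q => z (g q)).prod := by
  rw [sum_pow_expand]
  have step : ∀ i : Fin k,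
      τ ((∑ g : Fin k → Fin k, (List.ofFn fun q => matTensor (h (g q)) (z (g q))).prod) i i)
        = ∑ g : Fin k → Fin k,
            ((List.ofFn fun q => h (g q)).prod) i i * τ (List.ofFn fun q => z (g q)).prod := by
    intro i
    rw [Matrix.sum_apply, map_sum]
    refine Finset.sum_congr rfl fun g _ => ?_
    rw [matTensor_prod]
    show τ (((List.ofFn fun q => h (g q)).prod) i i • (List.ofFn fun q => z (g q)).prod) = _
    rw [map_smul, smul_eq_mul]
  simp only [step]
  rw [Finset.sum_comm, Finset.mul_sum]
  refine Finset.sum_congr rfl fun g _ => ?_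
  rw [← Finset.sum_mul, ← mul_assoc]
  congr 2

lemma tau_rotate (τ : A →ₗ[ℂ] ℂ) (hτ : ∀ a b : A, τ (a * b) = τ (b * a))
    {k : ℕ} [NeZero k] (z : Fin k → A) (c : Fin k) :
    τ (List.ofFn fun q => z (q + c)).prod = τ (List.ofFn z).prod := by
  have hlen : c.val ≤ (List.ofFn z).length := by simp [le_of_lt c.isLt]
  have hlist : (List.ofFn fun q => z (q + c)) = (List.ofFn z).rotate c.val := by
    apply List.ext_getElem (by simp)
    intro i h1 h2
    rw [List.getElem_ofFn, List.getElem_rotate, List.getElem_ofFn]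
    congr 1
    apply Fin.ext
    simp [Fin.val_add]
  rw [hlist, List.rotate_eq_drop_append_take hlen, List.prod_append, hτ, ← List.prod_append,
    List.take_append_drop]

end Aux

section Aux2

lemma stdBasis_list_prod {k : ℕ} [NeZero k] (w : List (Fin k)) (hw : w ≠ []) :
    (w.map fun p => Matrix.single p (p + 1) (1 : ℂ)).prod =
      if List.IsChain (fun p q => q = p + 1) w then
        Matrix.single (w.head hw) (w.getLast hw + 1) (1 : ℂ) else 0 := by
  induction w with
  | nil => exact absurd rfl hw
  | cons p rest ih =>
    match rest with
    | [] => simp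
    | q :: rest' =>
      rw [List.map_cons, List.prod_cons, ih (by simp)]
      by_cases h2 : List.IsChain (fun p q => q = p + 1) (q :: rest')
      · by_cases h1 : q = p + 1
        · rw [if_pos h2, if_pos ((List.isChain_cons_cons (R := fun p q => q = p + 1)).mpr ⟨h1, h2⟩),
            List.head_cons, List.head_cons, ← h1, Matrix.single_mul_single_same, one_mul,
            List.getLast_cons (List.cons_ne_nil _ _)]
        · rw [if_pos h2, List.head_cons, Matrix.single_mul_single_of_ne (h := Ne.symm h1),
            if_neg (fun hc => h1 ((List.isChain_cons_cons (R := fun p q => q = p + 1)).mp hc).1)]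
      · rw [if_neg h2, mul_zero,
          if_neg (fun hc => h2 ((List.isChain_cons_cons (R := fun p q => q = p + 1)).mp hc).2)]

lemma sum_superset_neg_one {α : Type*} [Fintype α] [DecidableEq α] (T : Finset α) :
    ∑ S : Finset α, (if T ⊆ S then (-1 : ℂ) ^ (Fintype.card α - S.card) else 0) =
      if T = Finset.univ then 1 else 0 := by
  classical
  rw [← Finset.sum_filter]
  have himg : Finset.univ.filter (fun S => T ⊆ S) = Tᶜ.powerset.image (fun R => T ∪ R) := by
    ext S
    simp only [Finset.mem_filter, Finset.mem_univ, true_and, Finset.mem_image,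
      Finset.mem_powerset]
    constructor
    · intro hTS
      refine ⟨S \ T, fun a ha => ?_, by rw [Finset.union_sdiff_of_subset hTS]⟩
      rw [Finset.mem_compl]
      exact (Finset.mem_sdiff.mp ha).2
    · rintro ⟨R, hR, rfl⟩
      exact Finset.subset_union_left
  have hinj : ∀ R₁ ∈ Tᶜ.powerset, ∀ R₂ ∈ Tᶜ.powerset, T ∪ R₁ = T ∪ R₂ → R₁ = R₂ := by
    intro R₁ h1 R₂ h2 h
    rw [Finset.mem_powerset] at h1 h2
    ext a
    constructor <;> intro ha
    · have : a ∈ T ∪ R₂ := by rw [← h]; exact Finset.mem_union_right _ ha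
      rcases Finset.mem_union.mp this with h' | h'
      · exact absurd h' (Finset.mem_compl.mp (h1 ha))
      · exact h'
    · have : a ∈ T ∪ R₁ := by rw [h]; exact Finset.mem_union_right _ ha
      rcases Finset.mem_union.mp this with h' | h'
      · exact absurd h' (Finset.mem_compl.mp (h2 ha))
      · exact h'
  rw [himg, Finset.sum_image hinj]
  have hcard : ∀ R ∈ Tᶜ.powerset, (T ∪ R).card = T.card + R.card := by
    intro R hR
    rw [Finset.mem_powerset] at hR
    rw [Finset.card_union_of_disjoint]
    exact Finset.disjoint_left.mpr fun a ha ha' => Finset.mem_compl.mp (hR ha') ha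
  have hkey : ∀ R ∈ Tᶜ.powerset,
      (-1 : ℂ) ^ (Fintype.card α - (T ∪ R).card) = (-1) ^ Tᶜ.card * (-1) ^ R.card := by
    intro R hR
    rw [hcard R hR]
    have h1 : R.card ≤ Tᶜ.card := Finset.card_le_card (Finset.mem_powerset.mp hR)
    have h2 : T.card + Tᶜ.card = Fintype.card α := by
      rw [Finset.card_add_card_compl]
    have h3 : Fintype.card α - (T.card + R.card) = Tᶜ.card - R.card := by omega
    rw [h3]
    have h4 : Tᶜ.card = (Tᶜ.card - R.card) + R.card := by omega
    calc (-1 : ℂ) ^ (Tᶜ.card - R.card)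
        = (-1) ^ (Tᶜ.card - R.card) * ((-1) ^ R.card * (-1) ^ R.card) := by
          rw [← pow_add, ← two_mul, pow_mul, neg_one_sq, one_pow, mul_one]
      _ = (-1) ^ Tᶜ.card * (-1) ^ R.card := by rw [← mul_assoc, ← pow_add, ← h4]
  rw [Finset.sum_congr rfl hkey, ← Finset.mul_sum]
  have : ∑ R ∈ Tᶜ.powerset, (-1 : ℂ) ^ R.card = if Tᶜ = ∅ then 1 else 0 := by
    have := Finset.sum_powerset_neg_one_pow_card (x := Tᶜ)
    calc ∑ R ∈ Tᶜ.powerset, (-1 : ℂ) ^ R.card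
        = ((∑ R ∈ Tᶜ.powerset, (-1 : ℤ) ^ R.card : ℤ) : ℂ) := by push_cast; ring
      _ = _ := by rw [this]; split <;> simp
  rw [this]
  by_cases hT : T = Finset.univ
  · rw [if_pos hT, if_pos (by simp [hT]), hT]
    simp
  · rw [if_neg hT, if_neg (by simpa using hT), mul_zero]

lemma sum_surj_eq_sum_perm {α : Type*} [Fintype α] [DecidableEq α] (F : (α → α) → ℂ) :
    ∑ g : α → α, (if Function.Surjective g then F g else 0) = ∑ e : Equiv.Perm α, F ⇑e := by
  rw [← Finset.sum_filter]
  have himg : Finset.univ.filter (fun g : α → α => Function.Surjective g)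
      = Finset.univ.image (fun e : Equiv.Perm α => ⇑e) := by
    ext g
    simp only [Finset.mem_filter, Finset.mem_univ, true_and, Finset.mem_image]
    constructor
    · intro hg
      exact ⟨Equiv.ofBijective g ⟨Finite.injective_iff_surjective.mpr hg, hg⟩, rfl⟩
    · rintro ⟨e, -, rfl⟩
      exact e.surjective
  rw [himg, Finset.sum_image (fun e₁ _ e₂ _ h => Equiv.coe_fn_injective h)]

lemma multilinear_vanish {ι : Type*} [Fintype ι] [DecidableEq ι] {M N : Type*}
    [AddCommMonoid M] [Module ℂ M] [AddCommMonoid N] [Module ℂ N]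
    (F : MultilinearMap ℂ (fun _ : ι => M) N) (s : Set M)
    (hs : Submodule.span ℂ s = ⊤) (h0 : ∀ v, (∀ i, v i ∈ s) → F v = 0) :
    ∀ v, F v = 0 := by
  suffices H : ∀ t : Finset ι, ∀ v : ι → M, (∀ i, i ∉ t → v i ∈ s) → F v = 0 by
    intro v
    exact H Finset.univ v (fun i hi => absurd (Finset.mem_univ i) hi)
  intro t
  induction t using Finset.induction_on with
  | empty => exact fun v hv => h0 v (fun i => hv i (Finset.notMem_empty i))
  | @insert a t ha ih =>
    intro v hv
    have key : ∀ z ∈ Submodule.span ℂ s, F (Function.update v a z) = 0 := by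
      intro z hz
      induction hz using Submodule.span_induction with
      | mem w hw =>
        refine ih _ fun i hi => ?_
        by_cases hia : i = a
        · subst hia; rwa [Function.update_self]
        · rw [Function.update_of_ne hia]
          exact hv i (by simp [Finset.mem_insert, hia, hi])
      | zero => exact F.map_update_zero v a
      | add w₁ w₂ h₁ h₂ ih₁ ih₂ => rw [F.map_update_add, ih₁, ih₂, add_zero]
      | smul c w hw ihw => rw [F.map_update_smul, ihw, smul_zero]
    have := key (v a) (by rw [hs]; trivial)
    rwa [Function.update_eq_self] at this

lemma hermitian_span {k : ℕ} :
    Submodule.span ℂ {a : Matrix (Fin k) (Fin k) ℂ | a.IsHermitian} = ⊤ := by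
  rw [Submodule.eq_top_iff']
  intro a
  have h1 : ((2 : ℂ)⁻¹ • (a + aᴴ)).IsHermitian := by
    unfold Matrix.IsHermitian
    rw [Matrix.conjTranspose_smul, Matrix.conjTranspose_add, Matrix.conjTranspose_conjTranspose]
    rw [add_comm]
    congr 1
    simp [starRingEnd_apply]
  have h2 : (((2 : ℂ)⁻¹ * Complex.I⁻¹) • (a - aᴴ)).IsHermitian := by
    unfold Matrix.IsHermitian
    rw [Matrix.conjTranspose_smul, Matrix.conjTranspose_sub, Matrix.conjTranspose_conjTranspose]
    have hstar : star ((2 : ℂ)⁻¹ * Complex.I⁻¹) = -((2 : ℂ)⁻¹ * Complex.I⁻¹) := by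
      simp [star_mul', Complex.star_def, ← Complex.conj_inv, Complex.conj_I]
      try ring
    rw [hstar, neg_smul, ← smul_neg, neg_sub]
  have key : a = (2 : ℂ)⁻¹ • (a + aᴴ) + Complex.I • (((2 : ℂ)⁻¹ * Complex.I⁻¹) • (a - aᴴ)) := by
    rw [smul_smul]
    have hc : Complex.I * ((2 : ℂ)⁻¹ * Complex.I⁻¹) = (2 : ℂ)⁻¹ := by
      field_simp
    rw [hc]
    module
  rw [key]
  exact Submodule.add_mem _ (Submodule.subset_span h1)
    (Submodule.smul_mem _ _ (Submodule.subset_span h2))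

lemma fin_mk_succ_eq {k : ℕ} [NeZero k] {m : ℕ} (hm : m + 1 < k) (hm' : m < k) :
    (⟨m + 1, hm⟩ : Fin k) = ⟨m, hm'⟩ + 1 := by
  apply Fin.ext
  rw [Fin.val_add, Fin.val_one']
  show m + 1 = (m + 1 % k) % k
  rw [Nat.mod_eq_of_lt (by omega : 1 < k), Nat.mod_eq_of_lt hm]

lemma fin_last_add_one {k : ℕ} [NeZero k] (h : k - 1 < k) : (⟨k - 1, h⟩ : Fin k) + 1 = 0 := by
  apply Fin.ext
  rw [Fin.val_add, Fin.val_one']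
  show (k - 1 + 1 % k) % k = 0
  rcases Nat.lt_or_ge 1 k with h1 | h1
  · rw [Nat.mod_eq_of_lt h1, Nat.sub_add_cancel (by omega), Nat.mod_self]
  · have : k = 1 := by have := Nat.pos_of_ne_zero (NeZero.ne k); omega
    subst this
    simp

/-- **Linearization of distributions (Collins–Dykema / de la Salle).**
Let `A`, `B` be unital complex `*`-algebras with unital tracial linear functionals `τ`, `σ`,
and let `x₁, …, xₙ ∈ A`, `y₁, …, yₙ ∈ B` be self-adjoint.  If for every `m ≥ 1`, every tuple
of Hermitian matrices `a₁, …, aₙ ∈ M_m(ℂ)` and every `j ≥ 1` the moments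
`(tr_m ⊗ τ)((Σ aᵢ ⊗ xᵢ)^j)` and `(tr_m ⊗ σ)((Σ aᵢ ⊗ yᵢ)^j)` agree, then `(x₁, …, xₙ)` and
`(y₁, …, yₙ)` have the same distribution. -/
theorem same_distribution_of_matrix_moments
    {A B : Type*} [Ring A] [Algebra ℂ A] [StarRing A] [StarModule ℂ A]
    [Ring B] [Algebra ℂ B] [StarRing B] [StarModule ℂ B]
    (τ : A →ₗ[ℂ] ℂ) (σ : B →ₗ[ℂ] ℂ)
    (hτtr : ∀ x y : A, τ (x * y) = τ (y * x))
    (hσtr : ∀ x y : B, σ (x * y) = σ (y * x))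
    (hτ1 : τ 1 = 1) (hσ1 : σ 1 = 1)
    (n : ℕ) (x : Fin n → A) (y : Fin n → B)
    (hx : ∀ i, IsSelfAdjoint (x i)) (hy : ∀ i, IsSelfAdjoint (y i))
    (hmom : ∀ (m : ℕ), 1 ≤ m → ∀ a : Fin n → Matrix (Fin m) (Fin m) ℂ,
      (∀ i, (a i).IsHermitian) → ∀ j : ℕ, 1 ≤ j →
      (m : ℂ)⁻¹ * ∑ i, τ (((∑ k, matTensor (a k) (x k)) ^ j) i i) =
      (m : ℂ)⁻¹ * ∑ i, σ (((∑ k, matTensor (a k) (y k)) ^ j) i i)) :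
    ∀ (k : ℕ), 1 ≤ k → ∀ idx : Fin k → Fin n,
      τ (List.ofFn (fun j => x (idx j))).prod = σ (List.ofFn (fun j => y (idx j))).prod := by
  intro k hk idx
  haveI : NeZero k := ⟨by omega⟩
  classical
  set cw : (Fin k → Fin k) → ℂ := fun g =>
    τ (List.ofFn fun q => x (idx (g q))).prod - σ (List.ofFn fun q => y (idx (g q))).prod
    with hcw
  -- Step 1: the moment hypothesis, expanded into words
  have hG : ∀ h : Fin k → Matrix (Fin k) (Fin k) ℂ, (∀ p, (h p).IsHermitian) →
      ∑ g : Fin k → Fin k,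
        ((k : ℂ)⁻¹ * ((List.ofFn fun q => h (g q)).prod).trace) * cw g = 0 := by
    intro h hh
    set a : Fin n → Matrix (Fin k) (Fin k) ℂ :=
      fun i => ∑ p ∈ Finset.univ.filter (fun p => idx p = i), h p with ha
    have haH : ∀ i, (a i).IsHermitian := by
      intro i
      unfold Matrix.IsHermitian
      rw [ha]
      simp only
      rw [Matrix.conjTranspose_sum]
      exact Finset.sum_congr rfl fun p _ => hh p
    have hsx : (∑ i, matTensor (a i) (x i)) = ∑ p, matTensor (h p) (x (idx p)) := by
      rw [← Finset.sum_fiberwise Finset.univ idx (fun p => matTensor (h p) (x (idx p)))]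
      refine Finset.sum_congr rfl fun i _ => ?_
      rw [ha]
      simp only
      rw [matTensor_sum]
      refine Finset.sum_congr rfl fun p hp => ?_
      rw [(Finset.mem_filter.mp hp).2]
    have hsy : (∑ i, matTensor (a i) (y i)) = ∑ p, matTensor (h p) (y (idx p)) := by
      rw [← Finset.sum_fiberwise Finset.univ idx (fun p => matTensor (h p) (y (idx p)))]
      refine Finset.sum_congr rfl fun i _ => ?_
      rw [ha]
      simp only
      rw [matTensor_sum]
      refine Finset.sum_congr rfl fun p hp => ?_
      rw [(Finset.mem_filter.mp hp).2]
    have hmm := hmom k hk a haH k hk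
    rw [hsx, hsy, F_expand τ h (fun p => x (idx p)), F_expand σ h (fun p => y (idx p))] at hmm
    simp only [hcw, mul_sub]
    rw [Finset.sum_sub_distrib, sub_eq_zero]
    exact hmm
  -- Step 2: the multilinearization, as a bundled multilinear map
  set Dmap : MultilinearMap ℂ (fun _ : Fin k => Matrix (Fin k) (Fin k) ℂ) ℂ :=
    ∑ e : Equiv.Perm (Fin k),
      (((k : ℂ)⁻¹ * cw ⇑e) • ((Matrix.traceLinearMap (Fin k) ℂ ℂ).compMultilinearMap
        ((MultilinearMap.mkPiAlgebraFin ℂ k (Matrix (Fin k) (Fin k) ℂ)).domDomCongr e)))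
    with hDdef
  have hDval : ∀ h : Fin k → Matrix (Fin k) (Fin k) ℂ,
      Dmap h = ∑ e : Equiv.Perm (Fin k),
        ((k : ℂ)⁻¹ * ((List.ofFn fun q => h (e q)).prod).trace) * cw ⇑e := by
    intro h
    rw [hDdef, MultilinearMap.sum_apply]
    refine Finset.sum_congr rfl fun e _ => ?_
    simp only [MultilinearMap.smul_apply, LinearMap.compMultilinearMap_apply,
      MultilinearMap.domDomCongr_apply, MultilinearMap.mkPiAlgebraFin_apply]
    show ((k : ℂ)⁻¹ * cw ⇑e) * Matrix.trace _ = _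
    ring_nf
  -- Step 3: inclusion-exclusion, Dmap vanishes on Hermitian tuples
  have hDherm : ∀ h : Fin k → Matrix (Fin k) (Fin k) ℂ, (∀ p, (h p).IsHermitian) →
      Dmap h = 0 := by
    intro h hh
    rw [hDval]
    have hz : ∀ S : Finset (Fin k),
        ∑ g : Fin k → Fin k, ((k : ℂ)⁻¹ *
          ((List.ofFn fun q => if g q ∈ S then h (g q) else 0).prod).trace) * cw g = 0 := by
      intro S
      have := hG (fun p => if p ∈ S then h p else 0)
        (fun p => by by_cases hp : p ∈ S <;> simp [hp, hh p, Matrix.isHermitian_zero])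
      simpa using this
    have hprod : ∀ (S : Finset (Fin k)) (g : Fin k → Fin k),
        (List.ofFn fun q => if g q ∈ S then h (g q) else 0).prod =
          if Finset.image g Finset.univ ⊆ S then (List.ofFn fun q => h (g q)).prod else 0 := by
      intro S g
      by_cases hc : Finset.image g Finset.univ ⊆ S
      · rw [if_pos hc]
        refine congrArg List.prod (congrArg List.ofFn (funext fun q => ?_))
        rw [if_pos (hc (Finset.mem_image_of_mem g (Finset.mem_univ q)))]
      · rw [if_neg hc]
        have hex : ∃ q, g q ∉ S := by
          by_contra hall
          push_neg at hall
          exact hc (Finset.image_subset_iff.mpr fun q _ => hall q)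
        obtain ⟨q, hq⟩ := hex
        exact List.prod_eq_zero (List.mem_ofFn.mpr ⟨q, if_neg hq⟩)
    have total : ∑ S : Finset (Fin k), (-1 : ℂ) ^ (Fintype.card (Fin k) - S.card) *
        ∑ g : Fin k → Fin k, ((k : ℂ)⁻¹ *
          ((List.ofFn fun q => if g q ∈ S then h (g q) else 0).prod).trace) * cw g = 0 := by
      refine Finset.sum_eq_zero fun S _ => ?_
      rw [hz S, mul_zero]
    have per_g : ∀ g : Fin k → Fin k,
        ∑ S : Finset (Fin k), (-1 : ℂ) ^ (Fintype.card (Fin k) - S.card) *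
          (((k : ℂ)⁻¹ *
            ((List.ofFn fun q => if g q ∈ S then h (g q) else 0).prod).trace) * cw g) =
        (if Function.Surjective g then
          ((k : ℂ)⁻¹ * ((List.ofFn fun q => h (g q)).prod).trace) * cw g else 0) := by
      intro g
      have hterm : ∀ S : Finset (Fin k), (-1 : ℂ) ^ (Fintype.card (Fin k) - S.card) *
          (((k : ℂ)⁻¹ *
            ((List.ofFn fun q => if g q ∈ S then h (g q) else 0).prod).trace) * cw g)
          = (if Finset.image g Finset.univ ⊆ S
              then (-1 : ℂ) ^ (Fintype.card (Fin k) - S.card) else 0) *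
            (((k : ℂ)⁻¹ * ((List.ofFn fun q => h (g q)).prod).trace) * cw g) := by
        intro S
        rw [hprod S g]
        by_cases hc : Finset.image g Finset.univ ⊆ S
        · rw [if_pos hc, if_pos hc]
        · rw [if_neg hc, if_neg hc]
          simp
      rw [Finset.sum_congr rfl (fun S _ => hterm S), ← Finset.sum_mul,
        sum_superset_neg_one]
      have himg : Finset.image g Finset.univ = Finset.univ ↔ Function.Surjective g := by
        constructor
        · intro he b
          have hb : b ∈ Finset.image g Finset.univ := by rw [he]; exact Finset.mem_univ b
          obtain ⟨a, -, ha⟩ := Finset.mem_image.mp hb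
          exact ⟨a, ha⟩
        · intro hs
          refine Finset.eq_univ_iff_forall.mpr fun b => ?_
          obtain ⟨a, ha⟩ := hs b
          exact Finset.mem_image.mpr ⟨a, Finset.mem_univ a, ha⟩
      by_cases hs : Function.Surjective g
      · rw [if_pos (himg.mpr hs), if_pos hs, one_mul]
      · rw [if_neg (fun hc => hs (himg.mp hc)), if_neg hs, zero_mul]
    have total2 : ∑ g : Fin k → Fin k, (if Function.Surjective g then
        ((k : ℂ)⁻¹ * ((List.ofFn fun q => h (g q)).prod).trace) * cw g else 0) = 0 := by
      calc ∑ g : Fin k → Fin k, (if Function.Surjective g then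
              ((k : ℂ)⁻¹ * ((List.ofFn fun q => h (g q)).prod).trace) * cw g else 0)
          = ∑ g : Fin k → Fin k, ∑ S : Finset (Fin k),
              (-1 : ℂ) ^ (Fintype.card (Fin k) - S.card) *
              (((k : ℂ)⁻¹ *
                ((List.ofFn fun q => if g q ∈ S then h (g q) else 0).prod).trace) * cw g) :=
            Finset.sum_congr rfl fun g _ => (per_g g).symm
        _ = ∑ S : Finset (Fin k), ∑ g : Fin k → Fin k,
              (-1 : ℂ) ^ (Fintype.card (Fin k) - S.card) *
              (((k : ℂ)⁻¹ *
                ((List.ofFn fun q => if g q ∈ S then h (g q) else 0).prod).trace) * cw g) :=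
            Finset.sum_comm
        _ = ∑ S : Finset (Fin k), (-1 : ℂ) ^ (Fintype.card (Fin k) - S.card) *
              ∑ g : Fin k → Fin k, (((k : ℂ)⁻¹ *
                ((List.ofFn fun q => if g q ∈ S then h (g q) else 0).prod).trace) * cw g) :=
            Finset.sum_congr rfl fun S _ => (Finset.mul_sum _ _ _).symm
        _ = 0 := total
    rw [← sum_surj_eq_sum_perm (fun g =>
      ((k : ℂ)⁻¹ * ((List.ofFn fun q => h (g q)).prod).trace) * cw g)]
    exact total2
  -- Step 4: Dmap vanishes everywhere
  have hDall : ∀ h, Dmap h = 0 :=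
    multilinear_vanish Dmap {a : Matrix (Fin k) (Fin k) ℂ | a.IsHermitian}
      hermitian_span (fun v hv => hDherm v hv)
  -- Step 5: evaluate at the cyclic-shift tuple
  set sMat : Fin k → Matrix (Fin k) (Fin k) ℂ :=
    fun p => Matrix.single p (p + 1) 1 with hsMatdef
  have heval := hDall sMat
  rw [hDval] at heval
  have hkpos : 0 < k := hk
  have hk1 : k - 1 < k := by omega
  -- trace of the product over a permutation
  have htr : ∀ e : Equiv.Perm (Fin k),
      ((List.ofFn fun q => sMat (e q)).prod).trace =
        if (∀ q : Fin k, e q = q + e 0) then 1 else 0 := by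
    intro e
    have hne : (List.ofFn (⇑e)) ≠ [] := by
      intro hcon
      have := List.ofFn_eq_nil_iff.mp hcon
      omega
    have hml : (List.ofFn fun q => sMat (e q)) =
        (List.ofFn ⇑e).map (fun p => Matrix.single p (p + 1) (1 : ℂ)) := by
      rw [List.map_ofFn]
      rfl
    rw [hml, stdBasis_list_prod _ hne]
    have hhead : (List.ofFn ⇑e).head hne = e ⟨0, hkpos⟩ := List.head_ofFn hne
    have hlast : (List.ofFn ⇑e).getLast hne = e ⟨k - 1, hk1⟩ := List.getLast_ofFn hne
    have hzero : (⟨0, hkpos⟩ : Fin k) = 0 := by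
      apply Fin.ext
      simp
    -- chain condition in index form
    have hchain_iff : List.IsChain (fun p q => q = p + 1) (List.ofFn ⇑e) ↔
        ∀ (m : ℕ) (h1 : m + 1 < k), e ⟨m + 1, h1⟩ = e ⟨m, by omega⟩ + 1 := by
      rw [List.isChain_iff_getElem]
      constructor
      · intro hc m h1
        have := hc m (by simpa using by omega)
        simpa [List.get_ofFn] using this
      · intro hc i hi
        simp only [List.length_ofFn] at hi
        have := hc i (by omega)
        simpa [List.get_ofFn] using this
    by_cases hch : List.IsChain (fun p q => q = p + 1) (List.ofFn ⇑e)
    · rw [if_pos hch]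
      have hchain := hchain_iff.mp hch
      by_cases hcl : e ⟨0, hkpos⟩ = e ⟨k - 1, hk1⟩ + 1
      · -- rotation case
        have hrot : ∀ q : Fin k, e q = q + e 0 := by
          have claim : ∀ (m : ℕ) (hm : m < k), e ⟨m, hm⟩ = ⟨m, hm⟩ + e 0 := by
            intro m
            induction m with
            | zero =>
              intro hm
              have h0 : (⟨0, hm⟩ : Fin k) = 0 := by
                apply Fin.ext
                simp
              rw [h0, zero_add]
            | succ m ihm =>
              intro hm
              have hm' : m < k := by omega
              have hstep := hchain m hm
              rw [hstep, ihm hm', fin_mk_succ_eq hm hm', add_right_comm]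
          intro q
          have := claim q.val q.isLt
          simpa using this
        rw [if_pos hrot, hhead, hlast]
        rw [← hcl, Matrix.trace_single_eq_same]
      · -- chain but not closed: trace is zero
        have hnrot : ¬ (∀ q : Fin k, e q = q + e 0) := by
          intro hrot
          apply hcl
          rw [hrot ⟨0, hkpos⟩, hrot ⟨k - 1, hk1⟩, add_right_comm, fin_last_add_one hk1,
            hzero, zero_add]
        rw [if_neg hnrot, hhead, hlast]
        exact Matrix.trace_single_eq_of_ne _ _ _ hcl
    · rw [if_neg hch, Matrix.trace_zero]
      have hnrot : ¬ (∀ q : Fin k, e q = q + e 0) := by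
        intro hrot
        apply hch
        refine hchain_iff.mpr fun m h1 => ?_
        rw [hrot ⟨m + 1, h1⟩, hrot ⟨m, by omega⟩, fin_mk_succ_eq h1 (by omega), add_right_comm]
      rw [if_neg hnrot]
  -- plug into heval
  have hterm2 : ∀ e : Equiv.Perm (Fin k),
      ((k : ℂ)⁻¹ * ((List.ofFn fun q => sMat (e q)).prod).trace) * cw ⇑e =
        if (∀ q : Fin k, e q = q + e 0) then (k : ℂ)⁻¹ * cw ⇑e else 0 := by
    intro e
    rw [htr e]
    by_cases hrot : ∀ q : Fin k, e q = q + e 0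
    · rw [if_pos hrot, if_pos hrot, mul_one]
    · rw [if_neg hrot, if_neg hrot, mul_zero, zero_mul]
  rw [Finset.sum_congr rfl (fun e _ => hterm2 e), ← Finset.sum_filter] at heval
  have hfilt : Finset.univ.filter (fun e : Equiv.Perm (Fin k) => ∀ q, e q = q + e 0) =
      Finset.univ.image (fun c : Fin k => Equiv.addRight c) := by
    ext e
    simp only [Finset.mem_filter, Finset.mem_univ, true_and, Finset.mem_image]
    constructor
    · intro hrot
      refine ⟨e 0, Equiv.ext fun q => ?_⟩
      rw [Equiv.coe_addRight]
      exact (hrot q).symm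
    · rintro ⟨c, rfl⟩
      intro q
      simp only [Equiv.coe_addRight]
      rw [zero_add]
  have hinj2 : ∀ c₁ ∈ (Finset.univ : Finset (Fin k)), ∀ c₂ ∈ Finset.univ,
      Equiv.addRight c₁ = Equiv.addRight c₂ → c₁ = c₂ := by
    intro c₁ _ c₂ _ hcc
    have := congrArg (fun f : Equiv.Perm (Fin k) => f 0) hcc
    simpa using this
  rw [hfilt, Finset.sum_image hinj2] at heval
  have hcwrot : ∀ c : Fin k, cw ⇑(Equiv.addRight c) = cw id := by
    intro c
    rw [hcw]
    simp only [Equiv.coe_addRight, id]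
    rw [tau_rotate τ hτtr (fun q => x (idx q)) c, tau_rotate σ hσtr (fun q => y (idx q)) c]
  rw [Finset.sum_congr rfl (fun c _ => by rw [hcwrot c])] at heval
  rw [Finset.sum_const, Finset.card_univ, Fintype.card_fin, nsmul_eq_mul] at heval
  have hkne : (k : ℂ) ≠ 0 := Nat.cast_ne_zero.mpr (by omega)
  have hcw0 : cw id = 0 := by
    have h2 : (k : ℂ) * ((k : ℂ)⁻¹ * cw id) = (k : ℂ) * 0 := by rw [heval, mul_zero]
    rwa [← mul_assoc, mul_inv_cancel₀ hkne, one_mul, mul_zero] at h2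
  have := sub_eq_zero.mp (by simpa [hcw] using hcw0)
  simpa using this
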